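/- Let D be a positive-definite symmetric d×d real matrix, μ ∈ ℝ^d nonzero, and define f(k, n) = k^{−d/2} exp(−((n−k)²/k) · (μ·D^{−1}μ)/2) for k, n ≥ 1. Then ∑_{k : |k−n| ≤ n^{1/2} (log n)^2} f(k, n) = (1 + o(1)) · n^{−(d−1)/2} · √(2π / (μ·D^{−1}μ)) as n → ∞. -/

import Mathlib

open scoped Classical
open Matrix Filter
open MeasureTheory Set Finset


lemma gauss_cont (c : ℝ) : Continuous (fun x : ℝ => Real.exp (-c * x ^ 2)) := by
  continuity

lemma gint_step_ge (c a : ℝ) (hc : 0 < c) (ha : 0 ≤ a) :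
    Real.exp (-c * (a + 1) ^ 2) ≤ ∫ x in a..(a + 1), Real.exp (-c * x ^ 2) := by
  have h := intervalIntegral.integral_mono_on (μ := volume)
    (f := fun _ : ℝ => Real.exp (-c * (a + 1) ^ 2))
    (g := fun x : ℝ => Real.exp (-c * x ^ 2))
    (by linarith : a ≤ a + 1)
    (intervalIntegrable_const) ((gauss_cont c).intervalIntegrable _ _)
    (fun x hx => by
      have hx1 : a ≤ x := hx.1
      have hx2 : x ≤ a + 1 := hx.2
      have : x ^ 2 ≤ (a + 1) ^ 2 := by nlinarith
      exact Real.exp_le_exp.2 (by nlinarith)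
    )
  simpa using h

lemma gint_step_le (c a : ℝ) (hc : 0 < c) (ha : 0 ≤ a) :
    (∫ x in a..(a + 1), Real.exp (-c * x ^ 2)) ≤ Real.exp (-c * a ^ 2) := by
  have h := intervalIntegral.integral_mono_on (μ := volume)
    (g := fun _ : ℝ => Real.exp (-c * a ^ 2))
    (f := fun x : ℝ => Real.exp (-c * x ^ 2))
    (by linarith : a ≤ a + 1)
    ((gauss_cont c).intervalIntegrable _ _) (intervalIntegrable_const)
    (fun x hx => by
      have hx1 : a ≤ x := hx.1
      have : a ^ 2 ≤ x ^ 2 := by nlinarith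
      exact Real.exp_le_exp.2 (by nlinarith)
    )
  simpa using h

lemma gint_sum_integral (c : ℝ) (a : ℝ) (N : ℕ) :
    ∫ x in a..(a + N), Real.exp (-c * x ^ 2)
      = ∑ j ∈ Finset.range N, ∫ x in (a + j)..(a + j + 1), Real.exp (-c * x ^ 2) := by
  induction N with
  | zero => simp
  | succ N ih =>
    rw [Finset.sum_range_succ, ← ih,
      intervalIntegral.integral_add_adjacent_intervals
        ((gauss_cont c).intervalIntegrable _ _) ((gauss_cont c).intervalIntegrable _ _)]
    norm_num [add_assoc]

lemma gint_le_Ioi (c : ℝ) (hc : 0 < c) (a b : ℝ) (ha : 0 ≤ a) (hab : a ≤ b) :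
    (∫ x in a..b, Real.exp (-c * x ^ 2)) ≤ ∫ x in Ioi (0:ℝ), Real.exp (-c * x ^ 2) := by
  rw [intervalIntegral.integral_of_le hab]
  apply setIntegral_mono_set ((integrable_exp_neg_mul_sq hc).integrableOn)
  · exact Filter.Eventually.of_forall (fun x => (Real.exp_pos _).le)
  · apply HasSubset.Subset.eventuallyLE
    intro x hx
    exact lt_of_le_of_lt ha hx.1

lemma sum_gauss_le (c : ℝ) (hc : 0 < c) (N : ℕ) :
    ∑ j ∈ Finset.range N, Real.exp (-c * ((j : ℝ) + 1) ^ 2)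
      ≤ Real.sqrt (Real.pi / c) / 2 := by
  have h1 : ∑ j ∈ Finset.range N, Real.exp (-c * ((j : ℝ) + 1) ^ 2)
      ≤ ∑ j ∈ Finset.range N, ∫ x in ((0:ℝ) + j)..((0:ℝ) + j + 1), Real.exp (-c * x ^ 2) := by
    apply Finset.sum_le_sum
    intro j _
    have := gint_step_ge c (j : ℝ) hc (Nat.cast_nonneg j)
    simpa using this
  rw [← gint_sum_integral] at h1
  have h2 := gint_le_Ioi c hc 0 (0 + N) le_rfl (by positivity)
  rw [integral_gaussian_Ioi] at h2
  exact h1.trans h2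

lemma gint_split (c : ℝ) (hc : 0 < c) (R : ℝ) (hR : 0 < R) :
    (∫ x in Ioi (0:ℝ), Real.exp (-c * x ^ 2))
      = (∫ x in (0:ℝ)..R, Real.exp (-c * x ^ 2))
        + ∫ x in Ioi R, Real.exp (-c * x ^ 2) := by
  rw [intervalIntegral.integral_of_le hR.le, ← MeasureTheory.setIntegral_union
    (Set.Ioc_disjoint_Ioi le_rfl) measurableSet_Ioi
    ((integrable_exp_neg_mul_sq hc).integrableOn) ((integrable_exp_neg_mul_sq hc).integrableOn),
    Set.Ioc_union_Ioi_eq_Ioi hR.le]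

lemma gint_zero_one_le (c : ℝ) (hc : 0 < c) :
    (∫ x in (0:ℝ)..1, Real.exp (-c * x ^ 2)) ≤ 1 := by
  have h := intervalIntegral.integral_mono_on (μ := volume)
    (f := fun x : ℝ => Real.exp (-c * x ^ 2))
    (g := fun _ : ℝ => (1:ℝ))
    (by norm_num : (0:ℝ) ≤ 1)
    ((gauss_cont c).intervalIntegrable _ _) (intervalIntegrable_const)
    (fun x hx => by
      rw [Real.exp_le_one_iff]
      nlinarith [hx.1])
  simpa using h

lemma sum_gauss_ge (c : ℝ) (hc : 0 < c) (N : ℕ) :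
    Real.sqrt (Real.pi / c) / 2 - 1 - (∫ x in Ioi ((N:ℝ) + 1), Real.exp (-c * x ^ 2))
      ≤ ∑ j ∈ Finset.range N, Real.exp (-c * ((j : ℝ) + 1) ^ 2) := by
  have h1 : (∫ x in (1:ℝ)..(1 + N), Real.exp (-c * x ^ 2))
      ≤ ∑ j ∈ Finset.range N, Real.exp (-c * ((j : ℝ) + 1) ^ 2) := by
    rw [gint_sum_integral]
    apply Finset.sum_le_sum
    intro j _
    have h := gint_step_le c ((1:ℝ) + j) hc (by positivity)
    have e1 : (1:ℝ) + j = (j : ℝ) + 1 := by ring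
    calc (∫ x in (1 + (j:ℝ))..(1 + j + 1), Real.exp (-c * x ^ 2))
        ≤ Real.exp (-c * ((1:ℝ) + j) ^ 2) := h
      _ = Real.exp (-c * ((j:ℝ) + 1) ^ 2) := by rw [e1]
  refine le_trans ?_ h1
  have h2 := gint_split c hc ((N:ℝ) + 1) (by positivity)
  have h3 : (∫ x in (0:ℝ)..((N:ℝ) + 1), Real.exp (-c * x ^ 2))
      = (∫ x in (0:ℝ)..1, Real.exp (-c * x ^ 2))
        + ∫ x in (1:ℝ)..(1 + N), Real.exp (-c * x ^ 2) := by
    rw [intervalIntegral.integral_add_adjacent_intervals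
      ((gauss_cont c).intervalIntegrable _ _) ((gauss_cont c).intervalIntegrable _ _)]
    norm_num [add_comm]
  have h4 := gint_zero_one_le c hc
  rw [integral_gaussian_Ioi] at h2
  linarith

lemma gauss_tail_le (c R : ℝ) (hc : 0 < c) (hR : 0 < R) :
    (∫ x in Ioi R, Real.exp (-c * x ^ 2)) ≤ Real.exp (-c * R ^ 2) / (c * R) := by
  have h1 : (∫ x in Ioi R, Real.exp (-c * x ^ 2)) ≤ ∫ x in Ioi R, Real.exp (-(c * R) * x) := by
    apply setIntegral_mono_on ((integrable_exp_neg_mul_sq hc).integrableOn)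
      (exp_neg_integrableOn_Ioi R (by positivity)) measurableSet_Ioi
    intro x hx
    have hx' : R < x := hx
    apply Real.exp_le_exp.2
    nlinarith [mul_nonneg (mul_nonneg hc.le (hR.trans hx').le) (sub_nonneg.2 hx'.le)]
  have h2 : (∫ x in Ioi R, Real.exp (-(c * R) * x)) = Real.exp (-c * R ^ 2) / (c * R) := by
    have h3 : (∫ x in Ioi R, Real.exp (-(c * R) * x))
        = ∫ x in Ioi R, (fun y => Real.exp (-y)) ((c * R) * x) := by
      congr 1; ext x; rw [neg_mul]
    rw [h3, MeasureTheory.integral_comp_mul_left_Ioi (fun y => Real.exp (-y)) R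
      (by positivity : 0 < c * R), integral_exp_neg_Ioi, smul_eq_mul]
    rw [div_eq_inv_mul]
    congr 1
    ring_nf
  calc (∫ x in Ioi R, Real.exp (-c * x ^ 2)) ≤ _ := h1
    _ = _ := h2

lemma sum_reflect_gauss (c : ℝ) (n : ℕ) :
    ∑ k ∈ Finset.range (n + 1), Real.exp (-c * ((n : ℝ) - k) ^ 2)
      = 1 + ∑ j ∈ Finset.range n, Real.exp (-c * ((j : ℝ) + 1) ^ 2) := by
  have h := Finset.sum_range_reflect (fun k => Real.exp (-c * ((n : ℝ) - k) ^ 2)) (n + 1)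
  rw [← h]
  have h2 : ∀ j ∈ Finset.range (n + 1),
      Real.exp (-c * ((n : ℝ) - ((n + 1 - 1 - j : ℕ) : ℝ)) ^ 2)
        = Real.exp (-c * (j : ℝ) ^ 2) := by
    intro j hj
    have hj' : j ≤ n := Nat.lt_succ_iff.mp (Finset.mem_range.mp hj)
    have : ((n + 1 - 1 - j : ℕ) : ℝ) = (n : ℝ) - j := by
      simp only [Nat.add_sub_cancel]
      push_cast [Nat.cast_sub hj']
      ring
    rw [this]
    ring_nf
  rw [Finset.sum_congr rfl h2, Finset.sum_range_succ']
  have h3 : ∀ j ∈ Finset.range n,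
      Real.exp (-c * ((j + 1 : ℕ) : ℝ) ^ 2) = Real.exp (-c * ((j : ℝ) + 1) ^ 2) := by
    intro j _; push_cast; ring_nf
  rw [Finset.sum_congr rfl h3]
  norm_num [add_comm]

lemma sum_shift_gauss (c : ℝ) (n m : ℕ) :
    ∑ k ∈ Finset.Ico (n + 1) (n + m + 1), Real.exp (-c * ((n : ℝ) - k) ^ 2)
      = ∑ j ∈ Finset.range m, Real.exp (-c * ((j : ℝ) + 1) ^ 2) := by
  rw [Finset.sum_Ico_eq_sum_range]
  have he : n + m + 1 - (n + 1) = m := by omega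
  rw [he]
  apply Finset.sum_congr rfl
  intro j _
  congr 1
  push_cast
  ring_nf

lemma sum_lower_gauss (c : ℝ) (n m : ℕ) (hm : m ≤ n) :
    ∑ k ∈ Finset.Ico (n - m) (n + 1), Real.exp (-c * ((n : ℝ) - k) ^ 2)
      = 1 + ∑ j ∈ Finset.range m, Real.exp (-c * ((j : ℝ) + 1) ^ 2) := by
  rw [Finset.sum_Ico_eq_sum_range]
  have he : n + 1 - (n - m) = m + 1 := by omega
  rw [he, ← sum_reflect_gauss c m]
  apply Finset.sum_congr rfl
  intro j _
  have : ((n - m : ℕ) : ℝ) = (n : ℝ) - m := by push_cast [Nat.cast_sub hm]; ring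
  congr 1
  push_cast [this]
  ring_nf

lemma theta_upper (c : ℝ) (hc : 0 < c) (n m : ℕ) :
    ∑ k ∈ Finset.range (n + m + 1), Real.exp (-c * ((n : ℝ) - k) ^ 2)
      ≤ 1 + Real.sqrt (Real.pi / c) := by
  rw [Finset.range_eq_Ico,
    ← Finset.sum_Ico_consecutive _ (Nat.zero_le (n + 1)) (by omega : n + 1 ≤ n + m + 1),
    ← Finset.range_eq_Ico, sum_reflect_gauss c n, sum_shift_gauss c n m]
  have h1 := sum_gauss_le c hc n
  have h2 := sum_gauss_le c hc m
  linarith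

lemma theta_lower (c : ℝ) (hc : 0 < c) (n m : ℕ) (hm : m ≤ n) :
    Real.sqrt (Real.pi / c) - 1 - 2 * (∫ x in Ioi ((m : ℝ) + 1), Real.exp (-c * x ^ 2))
      ≤ ∑ k ∈ Finset.Ico (n - m) (n + m + 1), Real.exp (-c * ((n : ℝ) - k) ^ 2) := by
  rw [← Finset.sum_Ico_consecutive _ (by omega : n - m ≤ n + 1) (by omega : n + 1 ≤ n + m + 1),
    sum_lower_gauss c n m hm, sum_shift_gauss c n m]
  have h1 := sum_gauss_ge c hc m
  linarith

open Filter

noncomputable def MrOZ (n : ℕ) : ℝ := Real.sqrt n * Real.log n ^ 2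

lemma MrOZ_nonneg (n : ℕ) : 0 ≤ MrOZ n := by
  unfold MrOZ; positivity

lemma delta_tendsto : Tendsto (fun n : ℕ => MrOZ n / n) atTop (nhds 0) := by
  have h0 : Tendsto (fun x : ℝ => Real.log x ^ 2 / x ^ ((1:ℝ)/2)) atTop (nhds 0) := by
    have h := (isLittleO_log_rpow_rpow_atTop 2 (by norm_num : (0:ℝ) < 1/2)).tendsto_div_nhds_zero
    refine h.congr' ?_
    filter_upwards [eventually_ge_atTop (1:ℝ)] with x hx
    rw [show ((2:ℝ)) = ((2:ℕ):ℝ) by norm_num, Real.rpow_natCast]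
  have h1 := h0.comp tendsto_natCast_atTop_atTop
  refine Tendsto.congr' ?_ h1
  filter_upwards [eventually_ge_atTop 1] with n hn
  have hx : (0:ℝ) < n := by exact_mod_cast Nat.pos_of_ne_zero (by omega)
  have hs : Real.mul_self_sqrt hx.le = Real.mul_self_sqrt hx.le := rfl
  have hsq := Real.mul_self_sqrt hx.le
  have hsp : 0 < Real.sqrt n := Real.sqrt_pos.2 hx
  have key : MrOZ n / n = Real.log n ^ 2 / Real.sqrt n := by
    unfold MrOZ
    rw [div_eq_div_iff hx.ne' hsp.ne']
    nlinarith [hsq]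
  rw [Function.comp_apply, key, Real.sqrt_eq_rpow]

lemma sqrt_nat_tendsto : Tendsto (fun n : ℕ => Real.sqrt n) atTop atTop := by
  have h := (tendsto_rpow_atTop (by norm_num : (0:ℝ) < 1/2)).comp tendsto_natCast_atTop_atTop
  refine Tendsto.congr' ?_ h
  filter_upwards [eventually_ge_atTop 0] with n _
  simp [Real.sqrt_eq_rpow]

lemma rpow_split (x : ℝ) (hx : 0 < x) (d : ℕ) :
    x ^ (-(d:ℝ)/2) = x ^ (-((d:ℝ)-1)/2) * (Real.sqrt x)⁻¹ := by
  rw [Real.sqrt_eq_rpow, ← Real.rpow_neg hx.le, ← Real.rpow_add hx]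
  congr 1; ring

lemma hi_tendsto (β : ℝ) (hβ : 0 < β) (d : ℕ) :
    Tendsto (fun n : ℕ => ((n:ℝ) - MrOZ n) ^ (-(d:ℝ)/2) * (1 + β * Real.sqrt ((n:ℝ) + MrOZ n))
      / ((n:ℝ) ^ (-((d:ℝ)-1)/2) * β)) atTop (nhds 1) := by
  have hδ0 := delta_tendsto
  have t1 : Tendsto (fun n : ℕ => 1 - MrOZ n / n) atTop (nhds 1) := by
    simpa using tendsto_const_nhds.sub hδ0
  have t2 : Tendsto (fun n : ℕ => (1 - MrOZ n / n) ^ (-(d:ℝ)/2)) atTop (nhds 1) := by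
    have := (Real.continuousAt_rpow_const 1 (-(d:ℝ)/2) (Or.inl one_ne_zero)).tendsto.comp t1
    simpa [Real.one_rpow, Function.comp_def] using this
  have t3 : Tendsto (fun n : ℕ => Real.sqrt (1 + MrOZ n / n)) atTop (nhds 1) := by
    have h1 : Tendsto (fun n : ℕ => 1 + MrOZ n / n) atTop (nhds 1) := by
      simpa using tendsto_const_nhds.add hδ0
    have := (Real.continuous_sqrt.tendsto (1:ℝ)).comp h1
    simpa [Real.sqrt_one, Function.comp_def] using this
  have t4 : Tendsto (fun n : ℕ => β⁻¹ * (Real.sqrt n)⁻¹) atTop (nhds 0) := by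
    have := sqrt_nat_tendsto.inv_tendsto_atTop
    simpa using this.const_mul β⁻¹
  have total := t2.mul (t4.add t3)
  have hlim : (1 : ℝ) * (0 + 1) = 1 := by norm_num
  rw [hlim] at total
  refine Tendsto.congr' ?_ total
  filter_upwards [eventually_ge_atTop 2, delta_tendsto.eventually_le_const (by norm_num : (0:ℝ) < 1/2)]
    with n hn2 hdh
  have hx : (0:ℝ) < n := by exact_mod_cast Nat.pos_of_ne_zero (by omega)
  have hM0 := MrOZ_nonneg n
  have hδ0' : 0 ≤ MrOZ n / n := by positivity
  have hδh : MrOZ n / n ≤ 1/2 := hdh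
  have h1d : (0:ℝ) ≤ 1 - MrOZ n / n := by linarith
  have e1 : (n:ℝ) - MrOZ n = n * (1 - MrOZ n / n) := by field_simp
  have e2 : (n:ℝ) + MrOZ n = n * (1 + MrOZ n / n) := by field_simp
  rw [eq_comm, e1, e2, Real.mul_rpow hx.le h1d, Real.sqrt_mul hx.le, rpow_split _ hx]
  have hA : (n:ℝ) ^ (-((d:ℝ)-1)/2) ≠ 0 := (Real.rpow_pos_of_pos hx _).ne'
  have hs : Real.sqrt n ≠ 0 := (Real.sqrt_pos.2 hx).ne'
  field_simp

lemma lo_tendsto (β : ℝ) (hβ : 0 < β) (d : ℕ) :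
    Tendsto (fun n : ℕ => ((n:ℝ) + MrOZ n) ^ (-(d:ℝ)/2) * (β * Real.sqrt ((n:ℝ) - MrOZ n) - 3)
      / ((n:ℝ) ^ (-((d:ℝ)-1)/2) * β)) atTop (nhds 1) := by
  have hδ0 := delta_tendsto
  have t2 : Tendsto (fun n : ℕ => (1 + MrOZ n / n) ^ (-(d:ℝ)/2)) atTop (nhds 1) := by
    have h1 : Tendsto (fun n : ℕ => 1 + MrOZ n / n) atTop (nhds 1) := by
      simpa using tendsto_const_nhds.add hδ0
    have := (Real.continuousAt_rpow_const 1 (-(d:ℝ)/2) (Or.inl one_ne_zero)).tendsto.comp h1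
    simpa [Real.one_rpow, Function.comp_def] using this
  have t3 : Tendsto (fun n : ℕ => Real.sqrt (1 - MrOZ n / n)) atTop (nhds 1) := by
    have h1 : Tendsto (fun n : ℕ => 1 - MrOZ n / n) atTop (nhds 1) := by
      simpa using tendsto_const_nhds.sub hδ0
    have := (Real.continuous_sqrt.tendsto (1:ℝ)).comp h1
    simpa [Real.sqrt_one, Function.comp_def] using this
  have t4 : Tendsto (fun n : ℕ => 3 * (β⁻¹ * (Real.sqrt n)⁻¹)) atTop (nhds 0) := by
    have := sqrt_nat_tendsto.inv_tendsto_atTop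
    simpa using (this.const_mul β⁻¹).const_mul (3:ℝ)
  have total := t2.mul (t3.sub t4)
  have hlim : (1 : ℝ) * (1 - 0) = 1 := by norm_num
  rw [hlim] at total
  refine Tendsto.congr' ?_ total
  filter_upwards [eventually_ge_atTop 2, delta_tendsto.eventually_le_const (by norm_num : (0:ℝ) < 1/2)]
    with n hn2 hdh
  have hx : (0:ℝ) < n := by exact_mod_cast Nat.pos_of_ne_zero (by omega)
  have hM0 := MrOZ_nonneg n
  have hδh : MrOZ n / n ≤ 1/2 := hdh
  have h1d : (0:ℝ) ≤ 1 - MrOZ n / n := by linarith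
  have e1 : (n:ℝ) - MrOZ n = n * (1 - MrOZ n / n) := by field_simp
  have e2 : (n:ℝ) + MrOZ n = n * (1 + MrOZ n / n) := by field_simp
  rw [eq_comm, e1, e2, Real.mul_rpow hx.le (by positivity), Real.sqrt_mul hx.le, rpow_split _ hx]
  have hA : (n:ℝ) ^ (-((d:ℝ)-1)/2) ≠ 0 := (Real.rpow_pos_of_pos hx _).ne'
  have hs : Real.sqrt n ≠ 0 := (Real.sqrt_pos.2 hx).ne'
  field_simp

open scoped Classical in
noncomputable def SOZ (α : ℝ) (d : ℕ) (n : ℕ) : ℝ :=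
  ∑' k : ℕ,
    (if 1 ≤ k ∧ |(k : ℝ) - (n : ℝ)| ≤ Real.sqrt n * Real.log n ^ 2 then
      (k : ℝ) ^ (-(d : ℝ) / 2) *
        Real.exp (-(((n : ℝ) - (k : ℝ)) ^ 2 / (k : ℝ)) * α / 2)
    else 0)

set_option maxHeartbeats 1600000 in
open scoped Classical in
lemma bounds_OZ (α : ℝ) (hα : 0 < α) (d : ℕ) :
    ∀ᶠ n : ℕ in atTop,
      ((n:ℝ) + MrOZ n) ^ (-(d:ℝ)/2) * (Real.sqrt (2 * Real.pi / α) * Real.sqrt ((n:ℝ) - MrOZ n) - 3)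
          ≤ SOZ α d n
        ∧ SOZ α d n
          ≤ ((n:ℝ) - MrOZ n) ^ (-(d:ℝ)/2) * (1 + Real.sqrt (2 * Real.pi / α) * Real.sqrt ((n:ℝ) + MrOZ n)) := by
  set β := Real.sqrt (2 * Real.pi / α) with hβdef
  have hev3 : ∀ᶠ n : ℕ in atTop, max 1 (2/α) ≤ Real.log n :=
    (Real.tendsto_log_atTop.comp tendsto_natCast_atTop_atTop).eventually_ge_atTop _
  have hev4 : ∀ᶠ n : ℕ in atTop, max 1 (2/α) ≤ Real.sqrt n :=
    sqrt_nat_tendsto.eventually_ge_atTop _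
  filter_upwards [eventually_ge_atTop 2,
    delta_tendsto.eventually_le_const (by norm_num : (0:ℝ) < 1/2), hev3, hev4]
    with n hn2 hδh hlogm hsqm
  -- basic facts
  have hx : (0:ℝ) < n := by exact_mod_cast Nat.pos_of_ne_zero (by omega)
  have hM0 : 0 ≤ MrOZ n := MrOZ_nonneg n
  have hM : MrOZ n ≤ (n:ℝ)/2 := by
    have := (div_le_iff₀ hx).1 hδh; linarith
  have hnM : 0 < (n:ℝ) - MrOZ n := by linarith
  have hlog1 : 1 ≤ Real.log n := le_trans (le_max_left _ _) hlogm
  have hlog2 : 2/α ≤ Real.log n := le_trans (le_max_right _ _) hlogm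
  have hsq1 : 1 ≤ Real.sqrt n := le_trans (le_max_left _ _) hsqm
  have hsq2 : 2/α ≤ Real.sqrt n := le_trans (le_max_right _ _) hsqm
  have hdneg : -(d:ℝ)/2 ≤ 0 := by
    have : (0:ℝ) ≤ d := Nat.cast_nonneg d; linarith
  set m := ⌊MrOZ n⌋₊ with hmdef
  have hmM : (m:ℝ) ≤ MrOZ n := Nat.floor_le hM0
  have hMm1 : MrOZ n < (m:ℝ) + 1 := Nat.lt_floor_add_one _
  have hm1n : m + 1 ≤ n := by
    have h1 : (m:ℝ) ≤ (n:ℝ) - 1 := by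
      have : (2:ℝ) ≤ n := by exact_mod_cast hn2
      linarith
    have : (m:ℝ) + 1 ≤ (n:ℝ) := by linarith
    exact_mod_cast this
  have hmn : m ≤ n := by omega
  set s : Finset ℕ := (Finset.range (n + m + 1)).filter
    (fun k => 1 ≤ k ∧ |(k:ℝ) - (n:ℝ)| ≤ Real.sqrt n * Real.log n ^ 2) with hsdef
  have hMr_eq : MrOZ n = Real.sqrt n * Real.log n ^ 2 := rfl
  -- tsum equals finite sum
  have hS : SOZ α d n = ∑ k ∈ s,
      (k : ℝ) ^ (-(d : ℝ) / 2) *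
        Real.exp (-(((n : ℝ) - (k : ℝ)) ^ 2 / (k : ℝ)) * α / 2) := by
    rw [SOZ, tsum_eq_sum (s := s) ?_]
    · refine Finset.sum_congr rfl (fun k hk => ?_)
      rw [if_pos (Finset.mem_filter.mp hk).2]
    · intro k hk
      by_cases hP : 1 ≤ k ∧ |(k:ℝ) - (n:ℝ)| ≤ Real.sqrt n * Real.log n ^ 2
      · exfalso
        apply hk
        rw [hsdef, Finset.mem_filter]
        refine ⟨Finset.mem_range.mpr ?_, hP⟩
        have h1 : (k:ℝ) - (n:ℝ) ≤ MrOZ n := (abs_le.mp (hMr_eq ▸ hP.2)).2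
        have h2 : (k:ℝ) < (n:ℝ) + m + 1 := by linarith
        exact_mod_cast h2
      · rw [if_neg hP]
  -- facts about members of s
  have hmem : ∀ k ∈ s, 1 ≤ k ∧ (n:ℝ) - MrOZ n ≤ (k:ℝ) ∧ (k:ℝ) ≤ (n:ℝ) + MrOZ n := by
    intro k hk
    obtain ⟨-, hk1, habs⟩ := Finset.mem_filter.mp hk
    rw [← hMr_eq] at habs
    obtain ⟨ha, hb⟩ := abs_le.mp habs
    exact ⟨hk1, by linarith, by linarith⟩
  have hssub : s ⊆ Finset.range (n + m + 1) := Finset.filter_subset _ _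
  have hsub : Finset.Ico (n - m) (n + m + 1) ⊆ s := by
    intro k hk
    obtain ⟨hk1, hk2⟩ := Finset.mem_Ico.mp hk
    rw [hsdef, Finset.mem_filter]
    have hnm1 : 1 ≤ n - m := by omega
    refine ⟨Finset.mem_range.mpr hk2, by omega, ?_⟩
    rw [← hMr_eq]
    have hkc1 : ((n:ℝ) - m) ≤ (k:ℝ) := by
      have : ((n - m : ℕ):ℝ) ≤ (k:ℝ) := by exact_mod_cast hk1
      rw [Nat.cast_sub hmn] at this
      exact this
    have hkc2 : (k:ℝ) ≤ (n:ℝ) + m := by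
      have : (k:ℕ) ≤ n + m := by omega
      exact_mod_cast this
    rw [abs_le]
    exact ⟨by linarith, by linarith⟩
  clear hsdef hmdef
  clear_value s m
  constructor
  · -- LOWER BOUND
    set cm := α / (2 * ((n:ℝ) - MrOZ n)) with hcmdef
    have hcm : 0 < cm := div_pos hα (by linarith)
    have hlb1 : ∀ k ∈ s,
        ((n:ℝ) + MrOZ n) ^ (-(d:ℝ)/2) * Real.exp (-cm * ((n:ℝ) - k) ^ 2)
          ≤ (k : ℝ) ^ (-(d : ℝ) / 2) *
            Real.exp (-(((n : ℝ) - (k : ℝ)) ^ 2 / (k : ℝ)) * α / 2) := by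
      intro k hk
      obtain ⟨hk1, hklo, hkhi⟩ := hmem k hk
      have hkpos : (0:ℝ) < k := by exact_mod_cast hk1
      refine mul_le_mul ?_ ?_ (Real.exp_pos _).le (Real.rpow_nonneg hkpos.le _)
      · exact Real.rpow_le_rpow_of_nonpos hkpos hkhi hdneg
      · apply Real.exp_le_exp.2
        have hq : (0:ℝ) ≤ ((n:ℝ) - k)^2 := sq_nonneg _
        have hkk : α/(2*(k:ℝ)) ≤ cm := by
          rw [hcmdef, div_le_div_iff₀ (by linarith) (by linarith)]
          nlinarith [mul_le_mul_of_nonneg_left hklo hα.le]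
        have he : -(((n:ℝ) - k)^2/(k:ℝ)) * α / 2 = -(α/(2*k)) * ((n:ℝ)-k)^2 := by
          field_simp
        rw [he]
        nlinarith [mul_nonneg (sub_nonneg.2 hkk) hq]
    have hlb3 : ∑ k ∈ Finset.Ico (n - m) (n + m + 1), Real.exp (-cm * ((n:ℝ) - k) ^ 2)
        ≤ ∑ k ∈ s, Real.exp (-cm * ((n:ℝ) - k) ^ 2) :=
      Finset.sum_le_sum_of_subset_of_nonneg hsub (fun k _ _ => (Real.exp_pos _).le)
    have hlb4 := theta_lower cm hcm n m hmn
    have htail := gauss_tail_le cm ((m:ℝ)+1) hcm (by positivity)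
    -- exp(-cm R^2)/(cm R) ≤ 1
    have hcm2 : α/(2*(n:ℝ)) ≤ cm := by
      rw [hcmdef, div_le_div_iff₀ (by linarith) (by linarith)]
      nlinarith [mul_nonneg hα.le hM0]
    have hαlog : 2 ≤ α * Real.log n := by
      rw [div_le_iff₀ hα] at hlog2; linarith
    have hαsq : 2 ≤ α * Real.sqrt n := by
      rw [div_le_iff₀ hα] at hsq2; linarith
    have hMsq : MrOZ n ^ 2 = (n:ℝ) * Real.log n ^ 4 := by
      rw [hMr_eq, mul_pow, Real.sq_sqrt hx.le]; ring
    have hR2 : (n:ℝ) * Real.log n ^ 4 ≤ ((m:ℝ)+1)^2 := by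
      rw [← hMsq]; nlinarith
    have key1 : Real.log n ≤ cm * ((m:ℝ)+1)^2 := by
      have h1 : α/(2*(n:ℝ)) * ((n:ℝ) * Real.log n ^ 4) ≤ cm * ((m:ℝ)+1)^2 :=
        mul_le_mul hcm2 hR2 (by positivity) hcm.le
      have h2 : α/(2*(n:ℝ)) * ((n:ℝ) * Real.log n ^ 4) = α * Real.log n ^ 4 / 2 := by
        field_simp
      rw [h2] at h1
      refine le_trans ?_ h1
      nlinarith [hlog1, hαlog, sq_nonneg (Real.log n), sq_nonneg (Real.log n - 1),
        mul_nonneg (sub_nonneg.2 hαlog) (sq_nonneg (Real.log n))]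
    have key2 : 1/(n:ℝ) ≤ cm * ((m:ℝ)+1) := by
      have h1 : α/(2*(n:ℝ)) * MrOZ n ≤ cm * ((m:ℝ)+1) :=
        mul_le_mul hcm2 (by linarith) hM0 hcm.le
      refine le_trans ?_ h1
      rw [hMr_eq, div_mul_eq_mul_div, div_le_div_iff₀ hx (by positivity)]
      have hlogsq : 1 ≤ Real.log n ^ 2 := by nlinarith [hlog1]
      have hstep : 2 * 1 ≤ (α * Real.sqrt n) * (Real.log n ^ 2) :=
        mul_le_mul hαsq hlogsq one_pos.le (by linarith)
      nlinarith [mul_le_mul_of_nonneg_right hstep hx.le]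
    have htail1 : Real.exp (-cm * ((m:ℝ)+1)^2) / (cm * ((m:ℝ)+1)) ≤ 1 := by
      rw [div_le_one (mul_pos hcm (by positivity))]
      calc Real.exp (-cm * ((m:ℝ)+1)^2) ≤ Real.exp (-Real.log n) :=
            Real.exp_le_exp.2 (by linarith)
        _ = 1/(n:ℝ) := by rw [Real.exp_neg, Real.exp_log hx, one_div]
        _ ≤ cm * ((m:ℝ)+1) := key2
    have hsqcm : Real.sqrt (Real.pi/cm) = β * Real.sqrt ((n:ℝ) - MrOZ n) := by
      have h1 : Real.pi/cm = (2*Real.pi/α) * ((n:ℝ) - MrOZ n) := by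
        rw [hcmdef]; field_simp
      rw [h1, Real.sqrt_mul (div_nonneg (by positivity) hα.le), hβdef]
    have hSig : β * Real.sqrt ((n:ℝ) - MrOZ n) - 3
        ≤ ∑ k ∈ s, Real.exp (-cm * ((n:ℝ) - k) ^ 2) := by
      have := hlb4
      rw [hsqcm] at this
      have htails : (∫ x in Set.Ioi ((m:ℝ)+1), Real.exp (-cm * x ^ 2)) ≤ 1 :=
        le_trans htail htail1
      linarith
    rw [hS]
    calc ((n:ℝ) + MrOZ n) ^ (-(d:ℝ)/2) * (β * Real.sqrt ((n:ℝ) - MrOZ n) - 3)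
        ≤ ((n:ℝ) + MrOZ n) ^ (-(d:ℝ)/2) * ∑ k ∈ s, Real.exp (-cm * ((n:ℝ) - k) ^ 2) := by
          apply mul_le_mul_of_nonneg_left hSig (Real.rpow_nonneg (by linarith) _)
      _ ≤ ∑ k ∈ s, (k : ℝ) ^ (-(d : ℝ) / 2) *
            Real.exp (-(((n : ℝ) - (k : ℝ)) ^ 2 / (k : ℝ)) * α / 2) := by
          rw [Finset.mul_sum]
          exact Finset.sum_le_sum hlb1
  · -- UPPER BOUND
    set cp := α / (2 * ((n:ℝ) + MrOZ n)) with hcpdef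
    have hcp : 0 < cp := div_pos hα (by linarith)
    have hub1 : ∀ k ∈ s,
        (k : ℝ) ^ (-(d : ℝ) / 2) *
          Real.exp (-(((n : ℝ) - (k : ℝ)) ^ 2 / (k : ℝ)) * α / 2)
          ≤ ((n:ℝ) - MrOZ n) ^ (-(d:ℝ)/2) * Real.exp (-cp * ((n:ℝ) - k) ^ 2) := by
      intro k hk
      obtain ⟨hk1, hklo, hkhi⟩ := hmem k hk
      have hkpos : (0:ℝ) < k := by exact_mod_cast hk1
      refine mul_le_mul ?_ ?_ (Real.exp_pos _).le (Real.rpow_nonneg hnM.le _)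
      · exact Real.rpow_le_rpow_of_nonpos hnM hklo hdneg
      · apply Real.exp_le_exp.2
        have hq : (0:ℝ) ≤ ((n:ℝ) - k)^2 := sq_nonneg _
        have hkk : cp ≤ α/(2*(k:ℝ)) := by
          rw [hcpdef, div_le_div_iff₀ (by linarith) (by linarith)]
          nlinarith [mul_le_mul_of_nonneg_left hkhi hα.le]
        have he : -(((n:ℝ) - k)^2/(k:ℝ)) * α / 2 = -(α/(2*k)) * ((n:ℝ)-k)^2 := by
          field_simp
        rw [he]
        nlinarith [mul_nonneg (sub_nonneg.2 hkk) hq]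
    have hub3 : ∑ k ∈ s, Real.exp (-cp * ((n:ℝ) - k) ^ 2)
        ≤ ∑ k ∈ Finset.range (n + m + 1), Real.exp (-cp * ((n:ℝ) - k) ^ 2) :=
      Finset.sum_le_sum_of_subset_of_nonneg hssub
        (fun k _ _ => (Real.exp_pos _).le)
    have hub4 := theta_upper cp hcp n m
    have hsqcp : Real.sqrt (Real.pi/cp) = β * Real.sqrt ((n:ℝ) + MrOZ n) := by
      have h1 : Real.pi/cp = (2*Real.pi/α) * ((n:ℝ) + MrOZ n) := by
        rw [hcpdef]; field_simp
      rw [h1, Real.sqrt_mul (div_nonneg (by positivity) hα.le), hβdef]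
    rw [hS]
    calc ∑ k ∈ s, (k : ℝ) ^ (-(d : ℝ) / 2) *
          Real.exp (-(((n : ℝ) - (k : ℝ)) ^ 2 / (k : ℝ)) * α / 2)
        ≤ ∑ k ∈ s, ((n:ℝ) - MrOZ n) ^ (-(d:ℝ)/2) * Real.exp (-cp * ((n:ℝ) - k) ^ 2) :=
          Finset.sum_le_sum hub1
      _ = ((n:ℝ) - MrOZ n) ^ (-(d:ℝ)/2) * ∑ k ∈ s, Real.exp (-cp * ((n:ℝ) - k) ^ 2) := by
          rw [Finset.mul_sum]
      _ ≤ ((n:ℝ) - MrOZ n) ^ (-(d:ℝ)/2) * (1 + β * Real.sqrt ((n:ℝ) + MrOZ n)) := by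
          apply mul_le_mul_of_nonneg_left ?_ (Real.rpow_nonneg hnM.le _)
          rw [← hsqcp]
          exact le_trans hub3 hub4


set_option maxHeartbeats 800000 in
/-- Gaussian summation behind the Ornstein–Zernike prefactor:
with `α = μ·D⁻¹μ` for a positive-definite `D` and `μ ≠ 0`,
`∑_{k : |k-n| ≤ √n (log n)², k ≥ 1} k^{-d/2} e^{-((n-k)²/k) α/2}
  = (1+o(1)) n^{-(d-1)/2} √(2π/α)`. -/
theorem gaussian_sum_OZ_prefactor {d : ℕ} (hd : 0 < d)
    (D : Matrix (Fin d) (Fin d) ℝ) (hD : D.PosDef)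
    (μ : Fin d → ℝ) (hμ : μ ≠ 0) :
    Tendsto
      (fun n : ℕ =>
        (∑' k : ℕ,
          (if 1 ≤ k ∧ |(k : ℝ) - (n : ℝ)| ≤ Real.sqrt n * Real.log n ^ 2 then
            (k : ℝ) ^ (-(d : ℝ) / 2) *
              Real.exp (-(((n : ℝ) - (k : ℝ)) ^ 2 / (k : ℝ)) *
                (μ ⬝ᵥ D⁻¹.mulVec μ) / 2)
          else 0)) /
        ((n : ℝ) ^ (-((d : ℝ) - 1) / 2) *
          Real.sqrt (2 * Real.pi / (μ ⬝ᵥ D⁻¹.mulVec μ))))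
      atTop (nhds 1) := by
  have hα : 0 < μ ⬝ᵥ D⁻¹.mulVec μ := by
    have h := (hD.inv).dotProduct_mulVec_pos hμ
    simpa using h
  set α := μ ⬝ᵥ D⁻¹.mulVec μ with hαdef
  set β := Real.sqrt (2 * Real.pi / α) with hβdef
  have hβ : 0 < β := Real.sqrt_pos.2 (by positivity)
  show Tendsto
      (fun n : ℕ => SOZ α d n / ((n : ℝ) ^ (-((d : ℝ) - 1) / 2) * β))
      atTop (nhds 1)
  refine tendsto_of_tendsto_of_tendsto_of_le_of_le' (lo_tendsto β hβ d) (hi_tendsto β hβ d) ?_ ?_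
  · filter_upwards [bounds_OZ α hα d, eventually_ge_atTop 1] with n hb hn1
    have hx : (0:ℝ) < n := by exact_mod_cast Nat.pos_of_ne_zero (by omega)
    have ht : 0 < (n : ℝ) ^ (-((d : ℝ) - 1) / 2) * β :=
      mul_pos (Real.rpow_pos_of_pos hx _) hβ
    exact (div_le_div_iff_of_pos_right ht).2 hb.1
  · filter_upwards [bounds_OZ α hα d, eventually_ge_atTop 1] with n hb hn1
    have hx : (0:ℝ) < n := by exact_mod_cast Nat.pos_of_ne_zero (by omega)
    have ht : 0 < (n : ℝ) ^ (-((d : ℝ) - 1) / 2) * β :=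
      mul_pos (Real.rpow_pos_of_pos hx _) hβ
    exact (div_le_div_iff_of_pos_right ht).2 hb.2
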